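/- arXiv:2112.00543 — 3 statements merged into one kernel-verified Lean document; each statement's English description precedes it below -/
import Mathlib

section
/- Let U₀, Ũ₀, U₁, Ũ₁ be unitaries on ℂ² and |φ₀⟩, |φ₁⟩ unit vectors in ℂ². Define |ψ₊⟩ ∝ (U₀Ũ₀ ⊗ U₁Ũ₁ + Ũ₀U₀ ⊗ Ũ₁U₁)(|φ₀⟩⊗|φ₁⟩). If ⟨φ₀| (Ũ₀U₀)† (U₀Ũ₀) |φ₀⟩ = 0 and ⟨φ₁| (Ũ₁U₁)† (U₁Ũ₁) |φ₁⟩ = 0, then |ψ₊⟩ (suitably normalized) is maximally entangled: its reduced density matrix on either qubit is (1/2)·I. -/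
open Matrix Complex

noncomputable section

def tens2 (a b : Fin 2 → ℂ) : Fin 2 × Fin 2 → ℂ := fun p => a p.1 * b p.2

def inner2 (u v : Fin 2 → ℂ) : ℂ := ∑ i, star (u i) * v i

/-- Kronecker (tensor) product of two single-qubit operators. -/
def kron2 (A B : Matrix (Fin 2) (Fin 2) ℂ) : Matrix (Fin 2 × Fin 2) (Fin 2 × Fin 2) ℂ :=
  Matrix.of fun p q => A p.1 q.1 * B p.2 q.2

/-- Reduced density matrix on the first qubit. -/
def rho1 (ψ : Fin 2 × Fin 2 → ℂ) : Matrix (Fin 2) (Fin 2) ℂ :=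
  Matrix.of fun i j => ∑ k, ψ (i, k) * star (ψ (j, k))

/-- Reduced density matrix on the second qubit. -/
def rho2 (ψ : Fin 2 × Fin 2 → ℂ) : Matrix (Fin 2) (Fin 2) ℂ :=
  Matrix.of fun i j => ∑ k, ψ (k, i) * star (ψ (k, j))

lemma inner2_mulVec (M : Matrix (Fin 2) (Fin 2) ℂ) (hM : Mᴴ * M = 1)
    (u v : Fin 2 → ℂ) : inner2 (M.mulVec u) (M.mulVec v) = inner2 u v := by
  have e : ∀ k l, star (M 0 k) * M 0 l + star (M 1 k) * M 1 l = (1 : Matrix (Fin 2) (Fin 2) ℂ) k l := by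
    intro k l
    have := congrFun (congrFun hM k) l
    simpa [Matrix.mul_apply, Fin.sum_univ_two, Matrix.conjTranspose_apply] using this
  have e00 := e 0 0; have e01 := e 0 1; have e10 := e 1 0; have e11 := e 1 1
  simp [Matrix.one_apply] at e00 e01 e10 e11
  simp only [inner2, Matrix.mulVec, dotProduct, Fin.sum_univ_two, RCLike.star_def, map_add, _root_.map_mul]
  linear_combination ((starRingEnd ℂ) (u 0) * v 0) * e00 + ((starRingEnd ℂ) (u 0) * v 1) * e01
    + ((starRingEnd ℂ) (u 1) * v 0) * e10 + ((starRingEnd ℂ) (u 1) * v 1) * e11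

lemma completeness (a b : Fin 2 → ℂ) (ha : inner2 a a = 1) (hb : inner2 b b = 1)
    (hab : inner2 a b = 0) (hba : inner2 b a = 0) :
    ∀ i j, a i * star (a j) + b i * star (b j) = (1 : Matrix (Fin 2) (Fin 2) ℂ) i j := by
  set M : Matrix (Fin 2) (Fin 2) ℂ := !![a 0, b 0; a 1, b 1] with hMdef
  simp only [inner2, Fin.sum_univ_two, RCLike.star_def] at ha hb hab hba
  have h1 : Mᴴ * M = 1 := by
    ext i j
    fin_cases i <;> fin_cases j <;>
      simp [hMdef, Matrix.mul_apply, Fin.sum_univ_two, Matrix.conjTranspose_apply,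
        Matrix.one_apply, RCLike.star_def] <;>
      first
        | linear_combination ha
        | linear_combination hb
        | linear_combination hab
        | linear_combination hba
  have h2 : M * Mᴴ = 1 := mul_eq_one_comm.mp h1
  intro i j
  have h := congrFun (congrFun h2 i) j
  fin_cases i <;> fin_cases j <;>
    simpa [hMdef, Matrix.mul_apply, Fin.sum_univ_two, Matrix.conjTranspose_apply,
      RCLike.star_def] using h

lemma inner2_star (u v : Fin 2 → ℂ) : inner2 u v = star (inner2 v u) := by
  simp [inner2, Fin.sum_univ_two, RCLike.star_def, mul_comm]

lemma rho1_combo (r : ℂ) (a b c d : Fin 2 → ℂ)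
    (hcc : inner2 c c = 1) (hdd : inner2 d d = 1)
    (hcd : inner2 c d = 0) (hdc : inner2 d c = 0)
    (hab : ∀ i j, a i * star (a j) + b i * star (b j) = (1 : Matrix (Fin 2) (Fin 2) ℂ) i j)
    (hr : r * star r = 1 / 2) :
    rho1 (fun p => r * (a p.1 * c p.2 + b p.1 * d p.2))
      = (1 / 2 : ℂ) • (1 : Matrix (Fin 2) (Fin 2) ℂ) := by
  ext i j
  have habij := hab i j
  simp only [inner2, Fin.sum_univ_two, RCLike.star_def] at hcc hdd hcd hdc habij hr
  simp only [rho1, Matrix.of_apply, Matrix.smul_apply, smul_eq_mul, Fin.sum_univ_two,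
    RCLike.star_def, map_add, _root_.map_mul]
  linear_combination (r * (starRingEnd ℂ) r * (a i * (starRingEnd ℂ) (a j))) * hcc
    + (r * (starRingEnd ℂ) r * (b i * (starRingEnd ℂ) (b j))) * hdd
    + (r * (starRingEnd ℂ) r * (a i * (starRingEnd ℂ) (b j))) * hdc
    + (r * (starRingEnd ℂ) r * (b i * (starRingEnd ℂ) (a j))) * hcd
    + ((a i * (starRingEnd ℂ) (a j) + b i * (starRingEnd ℂ) (b j))) * hr
    + (1 / 2 : ℂ) * habij

/-- if `⟨φᵢ|(ŨᵢUᵢ)†(UᵢŨᵢ)|φᵢ⟩ = 0` for `i = 0,1`, then the normalized switch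
output `|ψ₊⟩ ∝ (U₀Ũ₀ ⊗ U₁Ũ₁ + Ũ₀U₀ ⊗ Ũ₁U₁)(|φ₀⟩⊗|φ₁⟩)` is maximally entangled:
both single-qubit reduced density matrices equal `(1/2)·I`. -/
theorem switch_output_maximally_entangled
    (U₀ Ut₀ U₁ Ut₁ : Matrix (Fin 2) (Fin 2) ℂ)
    (hU₀ : U₀ ∈ Matrix.unitaryGroup (Fin 2) ℂ) (hUt₀ : Ut₀ ∈ Matrix.unitaryGroup (Fin 2) ℂ)
    (hU₁ : U₁ ∈ Matrix.unitaryGroup (Fin 2) ℂ) (hUt₁ : Ut₁ ∈ Matrix.unitaryGroup (Fin 2) ℂ)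
    (φ₀ φ₁ : Fin 2 → ℂ) (hφ₀ : inner2 φ₀ φ₀ = 1) (hφ₁ : inner2 φ₁ φ₁ = 1)
    (h0 : inner2 ((Ut₀ * U₀).mulVec φ₀) ((U₀ * Ut₀).mulVec φ₀) = 0)
    (h1 : inner2 ((Ut₁ * U₁).mulVec φ₁) ((U₁ * Ut₁).mulVec φ₁) = 0) :
    let ψ := ((Real.sqrt 2 : ℝ) : ℂ)⁻¹ •
      ((kron2 (U₀ * Ut₀) (U₁ * Ut₁) + kron2 (Ut₀ * U₀) (Ut₁ * U₁)).mulVec (tens2 φ₀ φ₁))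
    rho1 ψ = (1 / 2 : ℂ) • (1 : Matrix (Fin 2) (Fin 2) ℂ) ∧
    rho2 ψ = (1 / 2 : ℂ) • (1 : Matrix (Fin 2) (Fin 2) ℂ) := by
  intro ψ
  set r : ℂ := ((Real.sqrt 2 : ℝ) : ℂ)⁻¹ with hrdef
  set a := (U₀ * Ut₀).mulVec φ₀ with hadef
  set b := (Ut₀ * U₀).mulVec φ₀ with hbdef
  set c := (U₁ * Ut₁).mulVec φ₁ with hcdef
  set d := (Ut₁ * U₁).mulVec φ₁ with hddef
  have unit : ∀ (A B : Matrix (Fin 2) (Fin 2) ℂ), A ∈ Matrix.unitaryGroup (Fin 2) ℂ →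
      B ∈ Matrix.unitaryGroup (Fin 2) ℂ → (A * B)ᴴ * (A * B) = 1 := by
    intro A B hA hB
    have := (Matrix.mem_unitaryGroup_iff'.mp (mul_mem hA hB))
    simpa [Matrix.star_eq_conjTranspose] using this
  have haa : inner2 a a = 1 := by rw [hadef, inner2_mulVec _ (unit _ _ hU₀ hUt₀)]; exact hφ₀
  have hbb : inner2 b b = 1 := by rw [hbdef, inner2_mulVec _ (unit _ _ hUt₀ hU₀)]; exact hφ₀
  have hcc : inner2 c c = 1 := by rw [hcdef, inner2_mulVec _ (unit _ _ hU₁ hUt₁)]; exact hφ₁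
  have hdd : inner2 d d = 1 := by rw [hddef, inner2_mulVec _ (unit _ _ hUt₁ hU₁)]; exact hφ₁
  have hba : inner2 b a = 0 := h0
  have hdc : inner2 d c = 0 := h1
  have hab : inner2 a b = 0 := by rw [inner2_star, hba, star_zero]
  have hcd : inner2 c d = 0 := by rw [inner2_star, hdc, star_zero]
  have hr : r * star r = 1 / 2 := by
    have key : (Real.sqrt 2)⁻¹ * (Real.sqrt 2)⁻¹ = (1 / 2 : ℝ) := by
      rw [← mul_inv, Real.mul_self_sqrt (by norm_num)]
      norm_num
    rw [hrdef, RCLike.star_def, ← Complex.ofReal_inv, Complex.conj_ofReal,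
      ← Complex.ofReal_mul, key]
    norm_num
  have hψ : ψ = fun p => r * (a p.1 * c p.2 + b p.1 * d p.2) := by
    funext p
    obtain ⟨i, k⟩ := p
    simp only [ψ, hrdef, hadef, hbdef, hcdef, hddef, Pi.smul_apply, smul_eq_mul,
      Matrix.mulVec, dotProduct, Matrix.add_apply, kron2, tens2, Matrix.of_apply,
      Fintype.sum_prod_type, Fin.sum_univ_two]
    ring
  constructor
  · rw [hψ]
    exact rho1_combo r a b c d hcc hdd hcd hdc (completeness a b haa hbb hab hba) hr
  · have : rho2 ψ = rho1 (fun p => r * (c p.1 * a p.2 + d p.1 * b p.2)) := by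
      ext i j
      simp only [rho2, rho1, Matrix.of_apply, hψ, Fin.sum_univ_two]
      ring_nf
    rw [this]
    exact rho1_combo r c d a b haa hbb hab hba (completeness c d hcc hdd hcd hdc) hr
end
end

section
/- Let n ≥ 2, let Uᵢ, Ũᵢ (i = 0,…,n−1) be unitaries on ℂ² and |φᵢ⟩ unit vectors, and suppose ⟨φᵢ| (ŨᵢUᵢ)† (UᵢŨᵢ) |φᵢ⟩ = 0 for all i. Then the normalized state proportional to (⊗ᵢ UᵢŨᵢ + ⊗ᵢ ŨᵢUᵢ)(⊗ᵢ |φᵢ⟩) equals (⊗ᵢ Wᵢ)·(1/√2)(|0⟩^{⊗n} + |1⟩^{⊗n}) for some local unitaries Wᵢ on ℂ²; i.e., it is local-unitarily equivalent to the n-qubit GHZ state. -/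
open Matrix Complex

noncomputable section

/-- Tensor product of a family of `n` single-qubit vectors, as a vector on `(ℂ²)^⊗n`. -/
def tensN (n : ℕ) (a : Fin n → (Fin 2 → ℂ)) : (Fin n → Fin 2) → ℂ :=
  fun f => ∏ i, a i (f i)

/-- Tensor product of a family of `n` single-qubit operators. -/
def tensOp (n : ℕ) (M : Fin n → Matrix (Fin 2) (Fin 2) ℂ) :
    Matrix (Fin n → Fin 2) (Fin n → Fin 2) ℂ :=
  Matrix.of fun f g => ∏ i, M i (f i) (g i)

/-- The `n`-qubit GHZ state `(|0…0⟩+|1…1⟩)/√2`. -/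
def ghzN (n : ℕ) : (Fin n → Fin 2) → ℂ := fun f =>
  ((Real.sqrt 2 : ℝ) : ℂ)⁻¹ *
    ((if f = fun _ => 0 then 1 else 0) + (if f = fun _ => 1 then 1 else 0))

lemma tensOp_mulVec (n : ℕ) (M : Fin n → Matrix (Fin 2) (Fin 2) ℂ)
    (a : Fin n → (Fin 2 → ℂ)) :
    (tensOp n M).mulVec (tensN n a) = tensN n (fun i => (M i).mulVec (a i)) := by
  funext f
  simp only [tensOp, tensN, mulVec, dotProduct, Matrix.of_apply]
  rw [Fintype.prod_sum]
  exact Finset.sum_congr rfl fun g _ => by rw [← Finset.prod_mul_distrib]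

lemma inner2_mulVec_unitary (M : Matrix (Fin 2) (Fin 2) ℂ)
    (hM : M ∈ Matrix.unitaryGroup (Fin 2) ℂ) (x y : Fin 2 → ℂ) :
    inner2 (M.mulVec x) (M.mulVec y) = inner2 x y := by
  have key : ∀ j k, (∑ i, star (M i j) * M i k) = if j = k then (1:ℂ) else 0 := by
    intro j k
    have h : star M * M = 1 := Matrix.mem_unitaryGroup_iff'.mp hM
    have := congrFun (congrFun h j) k
    simpa [Matrix.mul_apply, Matrix.one_apply, Matrix.conjTranspose_apply] using this
  have k00 := key 0 0; have k01 := key 0 1; have k10 := key 1 0; have k11 := key 1 1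
  simp only [Fin.sum_univ_two, if_true, if_false, Fin.zero_eq_one_iff, Fin.one_eq_zero_iff,
    eq_self_iff_true, Nat.succ_ne_self] at k00 k01 k10 k11
  norm_num at k01 k10
  simp only [starRingEnd_apply] at k01 k10
  simp only [inner2, mulVec, dotProduct, Fin.sum_univ_two, star_add, star_mul']
  linear_combination (star (x 0) * y 0) * k00 + (star (x 0) * y 1) * k01 +
    (star (x 1) * y 0) * k10 + (star (x 1) * y 1) * k11

/-- under the orthogonality conditions, the normalized switch output
`∝ (⊗ᵢ UᵢŨᵢ + ⊗ᵢ ŨᵢUᵢ)(⊗ᵢ|φᵢ⟩)` is local-unitarily equivalent to the `n`-qubit GHZ state. -/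
theorem switch_output_LU_equivalent_GHZ
    (n : ℕ) (hn : 2 ≤ n)
    (U Ut : Fin n → Matrix (Fin 2) (Fin 2) ℂ)
    (hU : ∀ i, U i ∈ Matrix.unitaryGroup (Fin 2) ℂ)
    (hUt : ∀ i, Ut i ∈ Matrix.unitaryGroup (Fin 2) ℂ)
    (φ : Fin n → (Fin 2 → ℂ)) (hφ : ∀ i, inner2 (φ i) (φ i) = 1)
    (horth : ∀ i, inner2 ((Ut i * U i).mulVec (φ i)) ((U i * Ut i).mulVec (φ i)) = 0) :
    ∃ W : Fin n → Matrix (Fin 2) (Fin 2) ℂ,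
      (∀ i, W i ∈ Matrix.unitaryGroup (Fin 2) ℂ) ∧
      ((Real.sqrt 2 : ℝ) : ℂ)⁻¹ •
        ((tensOp n (fun i => U i * Ut i) + tensOp n (fun i => Ut i * U i)).mulVec
          (tensN n φ)) =
        (tensOp n W).mulVec (ghzN n) := by
  set a : Fin n → (Fin 2 → ℂ) := fun i => (U i * Ut i).mulVec (φ i) with ha
  set b : Fin n → (Fin 2 → ℂ) := fun i => (Ut i * U i).mulVec (φ i) with hb
  have haa : ∀ i, inner2 (a i) (a i) = 1 := fun i =>
    (inner2_mulVec_unitary _ (mul_mem (hU i) (hUt i)) _ _).trans (hφ i)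
  have hbb : ∀ i, inner2 (b i) (b i) = 1 := fun i =>
    (inner2_mulVec_unitary _ (mul_mem (hUt i) (hU i)) _ _).trans (hφ i)
  have hba : ∀ i, inner2 (b i) (a i) = 0 := horth
  have hab : ∀ i, inner2 (a i) (b i) = 0 := fun i => by
    rw [inner2_star, hba i, star_zero]
  set W : Fin n → Matrix (Fin 2) (Fin 2) ℂ :=
    fun i => Matrix.of fun r c => if c = 0 then a i r else b i r with hW
  refine ⟨W, ?_, ?_⟩
  · intro i
    rw [Matrix.mem_unitaryGroup_iff']
    have h1 := haa i; have h2 := hbb i; have h3 := hba i; have h4 := hab i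
    simp only [inner2, Fin.sum_univ_two, ← starRingEnd_apply] at h1 h2 h3 h4
    ext r c
    fin_cases r <;> fin_cases c <;>
      simp only [Matrix.mul_apply, Matrix.conjTranspose_apply, Fin.sum_univ_two,
        Matrix.one_apply, hW, Matrix.of_apply, ← starRingEnd_apply] <;>
      norm_num <;>
      first
      | linear_combination h1
      | linear_combination h2
      | linear_combination h3
      | linear_combination h4
  · have hcol : ∀ (c : Fin 2) (f : Fin n → Fin 2),
        (tensOp n W).mulVec (fun g => if g = (fun _ => c) then (1:ℂ) else 0) f
          = tensN n (if c = 0 then a else b) f := by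
      intro c f
      simp only [mulVec, dotProduct, mul_ite, mul_one, mul_zero,
        Finset.sum_ite_eq' Finset.univ, Finset.mem_univ, if_true]
      simp only [tensOp, tensN, Matrix.of_apply, hW]
      refine Finset.prod_congr rfl fun i _ => ?_
      fin_cases c <;> simp
    have hghz : (tensOp n W).mulVec (ghzN n)
        = ((Real.sqrt 2 : ℝ) : ℂ)⁻¹ • (tensN n a + tensN n b) := by
      funext f
      simp only [Pi.smul_apply, Pi.add_apply, smul_eq_mul]
      calc (tensOp n W).mulVec (ghzN n) f
          = ((Real.sqrt 2 : ℝ) : ℂ)⁻¹ *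
            ((tensOp n W).mulVec (fun g => if g = (fun _ => 0) then (1:ℂ) else 0) f
             + (tensOp n W).mulVec (fun g => if g = (fun _ => 1) then (1:ℂ) else 0) f) := by
            simp only [mulVec, dotProduct, ghzN]
            rw [mul_add, Finset.mul_sum, Finset.mul_sum, ← Finset.sum_add_distrib]
            exact Finset.sum_congr rfl fun g _ => by ring
        _ = _ := by rw [hcol 0 f, hcol 1 f]; simp
    rw [hghz, Matrix.add_mulVec, tensOp_mulVec, tensOp_mulVec]
end
end

section
/- Conversely: let aᵢ, bᵢ (i = 0,…,n−1) be unit vectors in ℂ² and suppose v = ⊗ᵢaᵢ + ⊗ᵢbᵢ is nonzero and bi-separable across some bipartition of the n qubits into two nonempty sets A and B. Then there exists an index i and a scalar c ∈ ℂ with bᵢ = c·aᵢ (i.e., some pair aᵢ, bᵢ is linearly dependent). -/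
open Matrix Complex

noncomputable section

lemma aux_dep {ι : Type*} [Fintype ι] [Nonempty ι] [DecidableEq ι] (a b : ι → Fin 2 → ℂ)
    (ha : ∀ i, a i ≠ 0) (hb : ∀ i, b i ≠ 0)
    (h : ∀ s s' : ι → Fin 2,
      (∏ i, a i (s i)) * (∏ i, b i (s' i)) = (∏ i, b i (s i)) * (∏ i, a i (s' i))) :
    ∃ (i : ι) (c : ℂ), b i = c • a i := by
  have hka : ∀ i, ∃ k, a i k ≠ 0 := by
    intro i
    obtain ⟨k, hk⟩ := Function.ne_iff.mp (ha i)
    exact ⟨k, hk⟩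
  choose ka hak using hka
  have hkb : ∀ i, ∃ k, b i k ≠ 0 := by
    intro i
    obtain ⟨k, hk⟩ := Function.ne_iff.mp (hb i)
    exact ⟨k, hk⟩
  choose kb hbk using hkb
  have hPa0 : (∏ i, a i (ka i)) ≠ 0 := Finset.prod_ne_zero_iff.mpr fun i _ => hak i
  have hPb0 : (∏ i, b i (kb i)) ≠ 0 := Finset.prod_ne_zero_iff.mpr fun i _ => hbk i
  set c : ℂ := (∏ i, b i (ka i)) / (∏ i, a i (ka i)) with hc
  have hprop : ∀ s : ι → Fin 2, (∏ i, b i (s i)) = c * ∏ i, a i (s i) := by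
    intro s
    rw [hc, div_mul_eq_mul_div, eq_div_iff hPa0]
    linear_combination h ka s
  obtain ⟨i0⟩ := ‹Nonempty ι›
  -- test functions equal to ka away from i0
  set s' : Fin 2 → ι → Fin 2 := fun k i => if i = i0 then k else ka i with hs'
  set Pa : ℂ := ∏ i ∈ Finset.univ.erase i0, a i (ka i) with hPa
  set Pb : ℂ := ∏ i ∈ Finset.univ.erase i0, b i (ka i) with hPb
  have hPane : Pa ≠ 0 := Finset.prod_ne_zero_iff.mpr fun i _ => hak i
  have hprodb : ∀ k, (∏ i, b i (s' k i)) = b i0 k * Pb := by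
    intro k
    rw [← Finset.mul_prod_erase Finset.univ _ (Finset.mem_univ i0)]
    congr 1
    · simp [hs']
    · refine Finset.prod_congr rfl fun i hi => ?_
      rw [hs']
      simp [Finset.ne_of_mem_erase hi]
  have hproda : ∀ k, (∏ i, a i (s' k i)) = a i0 k * Pa := by
    intro k
    rw [← Finset.mul_prod_erase Finset.univ _ (Finset.mem_univ i0)]
    congr 1
    · simp [hs']
    · refine Finset.prod_congr rfl fun i hi => ?_
      rw [hs']
      simp [Finset.ne_of_mem_erase hi]
  have key : ∀ k, b i0 k * Pb = c * (a i0 k * Pa) := by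
    intro k
    rw [← hprodb, ← hproda]
    exact hprop (s' k)
  by_cases hPbz : Pb = 0
  · -- then c = 0, contradicting that ∏ b (kb) ≠ 0
    have hc0 : c = 0 := by
      have := key (ka i0)
      rw [hPbz, mul_zero] at this
      rcases mul_eq_zero.mp this.symm with h1 | h1
      · exact h1
      · exact absurd h1 (mul_ne_zero (hak i0) hPane)
    have := hprop kb
    rw [hc0, zero_mul] at this
    exact absurd this hPb0
  · refine ⟨i0, c * Pa / Pb, funext fun k => ?_⟩
    have := key k
    rw [Pi.smul_apply, smul_eq_mul, div_mul_eq_mul_div, eq_div_iff hPbz]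
    linear_combination this

/-- if the nonzero vector `v = ⊗ᵢaᵢ + ⊗ᵢbᵢ` is bi-separable across some
nontrivial bipartition `(A, Aᶜ)` of the `n` qubits, then some pair `aᵢ, bᵢ` is linearly
dependent: `bᵢ = c·aᵢ` for some scalar `c`. -/
theorem biseparable_necessity
    (n : ℕ) (hn : 2 ≤ n)
    (a b : Fin n → (Fin 2 → ℂ))
    (ha : ∀ i, inner2 (a i) (a i) = 1) (hb : ∀ i, inner2 (b i) (b i) = 1)
    (hnz : tensN n a + tensN n b ≠ 0)
    (A : Set (Fin n)) (hA : A.Nonempty) (hAc : Aᶜ.Nonempty)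
    (hsep : ∃ (x : ({j : Fin n // j ∈ A} → Fin 2) → ℂ)
              (y : ({j : Fin n // j ∉ A} → Fin 2) → ℂ),
        ∀ f : Fin n → Fin 2,
          (tensN n a + tensN n b) f = x (fun j => f j.1) * y (fun j => f j.1)) :
    ∃ (i : Fin n) (c : ℂ), b i = c • a i := by
  classical
  by_contra hcon
  push_neg at hcon
  have ha0 : ∀ i, a i ≠ 0 := by
    intro i h
    have := ha i
    simp [inner2, h] at this
  have hb0 : ∀ i, b i ≠ 0 := by
    intro i h
    exact hcon i 0 (by rw [h, zero_smul])
  obtain ⟨x, y, hxy⟩ := hsep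
  set u1 : ({j : Fin n // j ∈ A} → Fin 2) → ℂ := fun s => ∏ j, a j.1 (s j) with hu1
  set u2 : ({j : Fin n // j ∈ A} → Fin 2) → ℂ := fun s => ∏ j, b j.1 (s j) with hu2
  set w1 : ({j : Fin n // j ∉ A} → Fin 2) → ℂ := fun t => ∏ j, a j.1 (t j) with hw1
  set w2 : ({j : Fin n // j ∉ A} → Fin 2) → ℂ := fun t => ∏ j, b j.1 (t j) with hw2
  have hsplita : ∀ f : Fin n → Fin 2,
      tensN n a f = u1 (fun j => f j.1) * w1 (fun j => f j.1) := by
    intro f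
    rw [hu1, hw1, tensN]
    exact (Fintype.prod_subtype_mul_prod_subtype (· ∈ A) (fun i => a i (f i))).symm
  have hsplitb : ∀ f : Fin n → Fin 2,
      tensN n b f = u2 (fun j => f j.1) * w2 (fun j => f j.1) := by
    intro f
    rw [hu2, hw2, tensN]
    exact (Fintype.prod_subtype_mul_prod_subtype (· ∈ A) (fun i => b i (f i))).symm
  have E : ∀ (s : {j : Fin n // j ∈ A} → Fin 2) (t : {j : Fin n // j ∉ A} → Fin 2),
      u1 s * w1 t + u2 s * w2 t = x s * y t := by
    intro s t
    set f : Fin n → Fin 2 := fun j => if h : j ∈ A then s ⟨j, h⟩ else t ⟨j, h⟩ with hf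
    have hrs : (fun j : {j : Fin n // j ∈ A} => f j.1) = s := by
      funext j
      rw [hf]
      simp [j.2]
    have hrt : (fun j : {j : Fin n // j ∉ A} => f j.1) = t := by
      funext j
      rw [hf]
      simp [j.2]
    have := hxy f
    rw [Pi.add_apply, hsplita f, hsplitb f, hrs, hrt] at this
    exact this
  have key : ∀ s s' t t',
      (u1 s * u2 s' - u2 s * u1 s') * (w1 t * w2 t' - w2 t * w1 t') = 0 := by
    intro s s' t t'
    have h1 := E s t
    have h2 := E s t'
    have h3 := E s' t
    have h4 := E s' t'
    linear_combination (u1 s' * w1 t' + u2 s' * w2 t') * h1 + (x s * y t) * h4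
      - (u1 s' * w1 t + u2 s' * w2 t) * h2 - (x s * y t') * h3
  haveI : Nonempty {j : Fin n // j ∈ A} := ⟨⟨hA.choose, hA.choose_spec⟩⟩
  haveI : Nonempty {j : Fin n // j ∉ A} := ⟨⟨hAc.choose, hAc.choose_spec⟩⟩
  by_cases hU : ∀ s s', u1 s * u2 s' = u2 s * u1 s'
  · obtain ⟨j, c, hjc⟩ := aux_dep (fun j : {j : Fin n // j ∈ A} => a j.1)
      (fun j => b j.1) (fun j => ha0 j.1) (fun j => hb0 j.1) hU
    exact hcon j.1 c hjc
  · push_neg at hU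
    obtain ⟨s, s', hss⟩ := hU
    have hW : ∀ t t', w1 t * w2 t' = w2 t * w1 t' := by
      intro t t'
      have := key s s' t t'
      rcases mul_eq_zero.mp this with h1 | h1
      · exact absurd (sub_eq_zero.mp h1) hss
      · exact sub_eq_zero.mp h1
    obtain ⟨j, c, hjc⟩ := aux_dep (fun j : {j : Fin n // j ∉ A} => a j.1)
      (fun j => b j.1) (fun j => ha0 j.1) (fun j => hb0 j.1) hW
    exact hcon j.1 c hjc
end
end
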